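/- arXiv:1209.6574 — 2 statements merged into one kernel-verified Lean document; each statement's English description precedes it below -/
import Mathlib

section
/- Let F be a differentiable real- (or complex-) valued function on the interval [R, 2R] with R > 0. Then sup_{t ∈ [R,2R]} |F(t)|² ≤ |F(R)|² + 2 (∫_R^{2R} |F(t)|² dt)^{1/2} · (∫_R^{2R} |F'(t)|² dt)^{1/2}. -/
open MeasureTheory Set

/-- If `F` is differentiable on `[R, 2R]`, `R > 0`, with derivative `F'`, and `|F|²`, `|F'|²`
are integrable on `[R, 2R]`, then for every `t ∈ [R, 2R]`,
`|F t|² ≤ |F R|² + 2 (∫_R^{2R} |F|²)^{1/2} (∫_R^{2R} |F'|²)^{1/2}`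
(i.e. the sup over `[R,2R]` of `|F|²` is bounded by the right-hand side). -/
theorem stmt0 (R : ℝ) (hR : 0 < R) (F F' : ℝ → ℂ)
    (hdiff : ∀ t ∈ Icc R (2 * R), HasDerivAt F (F' t) t)
    (hF : IntegrableOn (fun t => ‖F t‖ ^ 2) (Icc R (2 * R)))
    (hF' : IntegrableOn (fun t => ‖F' t‖ ^ 2) (Icc R (2 * R))) :
    (⨆ t ∈ Icc R (2 * R), ‖F t‖ ^ 2) ≤
      ‖F R‖ ^ 2 +
        2 * (∫ t in Icc R (2 * R), ‖F t‖ ^ 2) ^ ((1 : ℝ) / 2) *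
          (∫ t in Icc R (2 * R), ‖F' t‖ ^ 2) ^ ((1 : ℝ) / 2) := by
  set μ := volume.restrict (Icc R (2 * R)) with hμ
  set φ : ℝ → ℝ := fun s => 2 * (inner ℝ (F s) (F' s) : ℝ) with hφdef
  -- derivative of ‖F‖²
  have hderiv_sq : ∀ s ∈ Icc R (2 * R), HasDerivAt (fun u => ‖F u‖ ^ 2) (φ s) s := by
    intro s hs
    have h := (hdiff s hs).inner ℝ (hdiff s hs)
    have heq : (fun u => (inner ℝ (F u) (F u) : ℝ)) = fun u => ‖F u‖ ^ 2 := by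
      funext u; exact real_inner_self_eq_norm_sq (F u)
    rw [heq] at h
    refine h.congr_deriv ?_
    rw [hφdef]
    simp only [real_inner_comm (F' s) (F s)]
    ring
  -- measurability
  have hFcont : ContinuousOn F (Icc R (2 * R)) := fun s hs =>
    (hdiff s hs).continuousAt.continuousWithinAt
  have hFmeas : AEStronglyMeasurable F μ :=
    hFcont.aestronglyMeasurable measurableSet_Icc
  have h0 : ∀ᵐ s ∂μ, s ∈ Ioo R (2 * R) := by
    rw [hμ, ae_restrict_iff' measurableSet_Icc]
    have hz : volume ({R, 2 * R} : Set ℝ) = 0 :=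
      Set.Finite.measure_zero (Set.toFinite _) volume
    filter_upwards [measure_eq_zero_iff_ae_notMem.mp hz] with s hs hsIcc
    rcases hsIcc with ⟨h1, h2⟩
    constructor
    · rcases lt_or_eq_of_le h1 with h | h
      · exact h
      · exact absurd (by simp [← h]) hs
    · rcases lt_or_eq_of_le h2 with h | h
      · exact h
      · exact absurd (by simp [h]) hs
  have hF'eq : F' =ᵐ[μ] deriv F := by
    filter_upwards [h0] with s hs
    exact ((hdiff s (Ioo_subset_Icc_self hs)).deriv).symm
  have hF'meas : AEStronglyMeasurable F' μ :=
    ((measurable_deriv F).aestronglyMeasurable).congr hF'eq.symm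
  have hφmeas : AEStronglyMeasurable φ μ := by
    exact (hFmeas.inner (𝕜 := ℝ) hF'meas).const_mul 2
  -- pointwise bound for φ
  have hφbound : ∀ s, φ s ≤ 2 * (‖F s‖ * ‖F' s‖) := by
    intro s
    have := real_inner_le_norm (F s) (F' s)
    simp only [hφdef]
    linarith
  have hφabs : ∀ s, |φ s| ≤ ‖F s‖ ^ 2 + ‖F' s‖ ^ 2 := by
    intro s
    have h1 : |(inner ℝ (F s) (F' s) : ℝ)| ≤ ‖F s‖ * ‖F' s‖ := abs_real_inner_le_norm _ _
    have h2 : 2 * (‖F s‖ * ‖F' s‖) ≤ ‖F s‖ ^ 2 + ‖F' s‖ ^ 2 := by nlinarith [sq_nonneg (‖F s‖ - ‖F' s‖)]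
    rw [hφdef]
    calc |2 * (inner ℝ (F s) (F' s) : ℝ)| = 2 * |(inner ℝ (F s) (F' s) : ℝ)| := by
          rw [abs_mul]; norm_num
      _ ≤ 2 * (‖F s‖ * ‖F' s‖) := by linarith
      _ ≤ _ := h2
  have hφint : Integrable φ μ := by
    refine Integrable.mono' (hF.add hF') hφmeas ?_
    filter_upwards with s
    simp only [Pi.add_apply, Real.norm_eq_abs]
    exact hφabs s
  -- integrability of 2‖F‖‖F'‖
  have hGmeas : AEStronglyMeasurable (fun s => 2 * (‖F s‖ * ‖F' s‖)) μ :=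
    ((hFmeas.norm.mul hF'meas.norm).const_mul 2)
  have hGint : Integrable (fun s => 2 * (‖F s‖ * ‖F' s‖)) μ := by
    refine Integrable.mono' (hF.add hF') hGmeas ?_
    filter_upwards with s
    simp only [Pi.add_apply, Real.norm_eq_abs]
    rw [abs_of_nonneg (by positivity)]
    nlinarith [sq_nonneg (‖F s‖ - ‖F' s‖)]
  -- Cauchy–Schwarz
  have hFmem : MemLp F (ENNReal.ofReal 2) μ := by
    have h2 : (ENNReal.ofReal 2) = 2 := by norm_num
    rw [h2]
    exact (memLp_two_iff_integrable_sq_norm hFmeas).mpr hF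
  have hF'mem : MemLp F' (ENNReal.ofReal 2) μ := by
    have h2 : (ENNReal.ofReal 2) = 2 := by norm_num
    rw [h2]
    exact (memLp_two_iff_integrable_sq_norm hF'meas).mpr hF'
  have hCS : ∫ s, ‖F s‖ * ‖F' s‖ ∂μ ≤
      (∫ t in Icc R (2 * R), ‖F t‖ ^ 2) ^ ((1 : ℝ) / 2) *
        (∫ t in Icc R (2 * R), ‖F' t‖ ^ 2) ^ ((1 : ℝ) / 2) := by
    have hconj : Real.HolderConjugate 2 2 := Real.HolderConjugate.two_two
    have h := integral_mul_norm_le_Lp_mul_Lq (μ := μ) hconj hFmem hF'mem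
    have e1 : (∫ a, ‖F a‖ ^ (2:ℝ) ∂μ) = ∫ t in Icc R (2 * R), ‖F t‖ ^ 2 := by
      rw [hμ]; congr 1; funext a; rw [Real.rpow_two]
    have e2 : (∫ a, ‖F' a‖ ^ (2:ℝ) ∂μ) = ∫ t in Icc R (2 * R), ‖F' t‖ ^ 2 := by
      rw [hμ]; congr 1; funext a; rw [Real.rpow_two]
    rw [e1, e2] at h
    exact h
  have hA : (0:ℝ) ≤ ∫ t in Icc R (2 * R), ‖F t‖ ^ 2 := by positivity
  have hB : (0:ℝ) ≤ ∫ t in Icc R (2 * R), ‖F' t‖ ^ 2 := by positivity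
  have hRHS0 : (0:ℝ) ≤ ‖F R‖ ^ 2 +
      2 * (∫ t in Icc R (2 * R), ‖F t‖ ^ 2) ^ ((1 : ℝ) / 2) *
        (∫ t in Icc R (2 * R), ‖F' t‖ ^ 2) ^ ((1 : ℝ) / 2) := by positivity
  have key : ∀ t ∈ Icc R (2 * R), ‖F t‖ ^ 2 ≤
      ‖F R‖ ^ 2 +
        2 * (∫ t in Icc R (2 * R), ‖F t‖ ^ 2) ^ ((1 : ℝ) / 2) *
          (∫ t in Icc R (2 * R), ‖F' t‖ ^ 2) ^ ((1 : ℝ) / 2) := by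
    intro t ht
    obtain ⟨hRt, ht2R⟩ := ht
    have hsub : Icc R t ⊆ Icc R (2 * R) := Icc_subset_Icc le_rfl ht2R
    have huIcc : uIcc R t = Icc R t := uIcc_of_le hRt
    have hintφ : IntervalIntegrable φ volume R t := by
      rw [intervalIntegrable_iff_integrableOn_Icc_of_le hRt]
      exact hφint.mono_measure (Measure.restrict_mono hsub le_rfl)
    have hintG : IntervalIntegrable (fun s => 2 * (‖F s‖ * ‖F' s‖)) volume R t := by
      rw [intervalIntegrable_iff_integrableOn_Icc_of_le hRt]
      exact hGint.mono_measure (Measure.restrict_mono hsub le_rfl)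
    have hFTC : ∫ s in R..t, φ s = ‖F t‖ ^ 2 - ‖F R‖ ^ 2 := by
      refine intervalIntegral.integral_eq_sub_of_hasDerivAt (f := fun u => ‖F u‖ ^ 2) (fun s hs => ?_) hintφ
      exact hderiv_sq s (hsub (huIcc ▸ hs))
    have step1 : ∫ s in R..t, φ s ≤ ∫ s in R..t, 2 * (‖F s‖ * ‖F' s‖) :=
      intervalIntegral.integral_mono_on hRt hintφ hintG (fun s _ => hφbound s)
    have step2 : ∫ s in R..t, 2 * (‖F s‖ * ‖F' s‖) ≤ ∫ s, 2 * (‖F s‖ * ‖F' s‖) ∂μ := by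
      rw [intervalIntegral.integral_of_le hRt, hμ]
      refine setIntegral_mono_set hGint ?_ ?_
      · filter_upwards with s; positivity
      · exact HasSubset.Subset.eventuallyLE ((Ioc_subset_Icc_self).trans hsub)
    have step3 : ∫ s, 2 * (‖F s‖ * ‖F' s‖) ∂μ ≤
        2 * ((∫ t in Icc R (2 * R), ‖F t‖ ^ 2) ^ ((1 : ℝ) / 2) *
          (∫ t in Icc R (2 * R), ‖F' t‖ ^ 2) ^ ((1 : ℝ) / 2)) := by
      rw [integral_const_mul]
      exact mul_le_mul_of_nonneg_left hCS (by norm_num)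
    nlinarith
  refine Real.iSup_le (fun t => ?_) hRHS0
  exact Real.iSup_le (fun ht => key t ht) hRHS0
end

section
/- Let u(x,t) = (F * Φ_t)(x) solve the heat equation on ℝⁿ × ℝ₊ with initial data F ∈ L²(ℝⁿ), where Φ_t is the heat kernel. Then for every t > 0 and H = ℝ^k × {0}, the restriction u(·,t)|_H lies in L²(ℝ^k) and ‖u(·,t)|_H‖_{L²(ℝ^k)} ≤ (4πt)^{-(n-k)/4} · ‖F‖_{L²(ℝⁿ)}. -/
open MeasureTheory Real

noncomputable section
open scoped ENNReal NNReal
set_option maxHeartbeats 1000000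

/-- `ℝ^n` with its Euclidean structure. -/
abbrev E (n : ℕ) : Type := EuclideanSpace ℝ (Fin n)

/-- The identification `ℝ^k × ℝ^m ≃ ℝ^{k+m}`, `(x', x'') ↦ x`. -/
def app {k m : ℕ} (a : E k) (b : E m) : E (k + m) :=
  (EuclideanSpace.equiv (Fin (k + m)) ℝ).symm
    (Fin.append ((EuclideanSpace.equiv (Fin k) ℝ) a) ((EuclideanSpace.equiv (Fin m) ℝ) b))

lemma app_sub {k m : ℕ} (a c : E k) (b d : E m) : app a b - app c d = app (a - c) (b - d) := by
  ext i
  induction i using Fin.addCases with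
  | left i => simp [app, Fin.append_left]
  | right i => simp [app, Fin.append_right]

lemma norm_sq_eq' {n : ℕ} (x : E n) : ‖x‖^2 = ∑ i, (x i)^2 := by
  rw [EuclideanSpace.norm_eq, Real.sq_sqrt (Finset.sum_nonneg fun i _ => sq_nonneg _)]
  simp [sq_abs]

lemma norm_app_sq {k m : ℕ} (a : E k) (b : E m) : ‖app a b‖^2 = ‖a‖^2 + ‖b‖^2 := by
  simp only [norm_sq_eq']
  rw [Fin.sum_univ_add (f := fun i => (app a b i)^2)]
  congr 1
  · exact Finset.sum_congr rfl fun i _ => by simp [app, Fin.append_left]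
  · exact Finset.sum_congr rfl fun i _ => by simp [app, Fin.append_right]

lemma euclid_symm_apply {n : ℕ} (f : Fin n → ℝ) (i : Fin n) :
    (MeasurableEquiv.toLp 2 (Fin n → ℝ)).symm.symm f i = f i := rfl

lemma app_mp {k m : ℕ} : MeasurePreserving (fun p : E k × E m => app p.1 p.2)
    ((volume : Measure (E k)).prod (volume : Measure (E m))) (volume : Measure (E (k+m))) := by
  have h1 := (EuclideanSpace.volume_preserving_symm_measurableEquiv_toLp (Fin k)).prod
    (EuclideanSpace.volume_preserving_symm_measurableEquiv_toLp (Fin m))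
  have h2 := volume_measurePreserving_sumPiEquivProdPi_symm (fun _ : Fin k ⊕ Fin m => ℝ)
  have h3 := volume_measurePreserving_piCongrLeft (fun _ : Fin (k+m) => ℝ) finSumFinEquiv
  have h4 := (EuclideanSpace.volume_preserving_symm_measurableEquiv_toLp (Fin (k+m))).symm
  have htot := h4.comp (h3.comp (h2.comp h1))
  convert htot using 1
  · rfl
  funext p
  ext i
  show app p.1 p.2 i = _
  simp only [Function.comp_apply, euclid_symm_apply]
  induction i using Fin.addCases with
  | left i =>
      rw [show Fin.castAdd m i = finSumFinEquiv (Sum.inl i) from rfl,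
        MeasurableEquiv.piCongrLeft_apply_apply]
      simp [app, Fin.append_left, MeasurableEquiv.coe_sumPiEquivProdPi_symm,
        Equiv.sumPiEquivProdPi_symm_apply]
  | right i =>
      rw [show Fin.natAdd k i = finSumFinEquiv (Sum.inr i) from rfl,
        MeasurableEquiv.piCongrLeft_apply_apply]
      simp [app, Fin.append_right, MeasurableEquiv.coe_sumPiEquivProdPi_symm,
        Equiv.sumPiEquivProdPi_symm_apply]

lemma gauss_lint (n : ℕ) {t : ℝ} (ht : 0 < t) :
    ∫⁻ y : E n, ENNReal.ofReal (Real.exp (-‖y‖^2/(4*t))) = ENNReal.ofReal ((4*π*t) ^ ((n:ℝ)/2)) := by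
  have hb : (0:ℝ) < (4*t)⁻¹ := by positivity
  have heq : ∀ y : E n, -‖y‖^2/(4*t) = -(4*t)⁻¹ * ‖y‖^2 := fun y => by field_simp
  have h0 : (0:ℝ) < (((4*t)⁻¹ : ℝ) : ℂ).re := by simpa using hb
  have hInt : Integrable (fun v : E n => Real.exp (-(4*t)⁻¹ * ‖v‖^2)) := by
    have h := (GaussianFourier.integrable_cexp_neg_mul_sq_norm_add (V := E n) h0 0 0).norm
    refine h.congr (Filter.Eventually.of_forall fun v => ?_)
    simp [Complex.norm_exp, ← Complex.ofReal_pow]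
  calc ∫⁻ y : E n, ENNReal.ofReal (Real.exp (-‖y‖^2/(4*t)))
      = ∫⁻ y : E n, ENNReal.ofReal (Real.exp (-(4*t)⁻¹ * ‖y‖^2)) := by simp_rw [heq]
    _ = ENNReal.ofReal (∫ y : E n, Real.exp (-(4*t)⁻¹ * ‖y‖^2)) :=
        (ofReal_integral_eq_lintegral_ofReal hInt
          (Filter.Eventually.of_forall fun y => (Real.exp_pos _).le)).symm
    _ = ENNReal.ofReal ((4*π*t) ^ ((n:ℝ)/2)) := by
        rw [GaussianFourier.integral_rexp_neg_mul_sq_norm hb]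
        congr 1
        rw [finrank_euclideanSpace_fin]
        congr 1
        field_simp

lemma cs_step {n : ℕ} (f : E n → ℝ≥0∞) (Φ : E n → ℝ≥0∞) (hf : Measurable f) (hΦ : Measurable Φ)
    (hΦ1 : ∫⁻ y, Φ y = 1) :
    (∫⁻ y, f y * Φ y)^2 ≤ ∫⁻ y, f y^2 * Φ y := by
  have hconj : Real.HolderConjugate 2 2 := ⟨by norm_num, by norm_num, by norm_num⟩
  have hmeas1 : AEMeasurable (fun y => f y * (Φ y) ^ ((2:ℝ)⁻¹)) volume :=
    (hf.mul (ENNReal.continuous_rpow_const.measurable.comp hΦ)).aemeasurable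
  have hmeas2 : AEMeasurable (fun y => (Φ y) ^ ((2:ℝ)⁻¹)) volume :=
    (ENNReal.continuous_rpow_const.measurable.comp hΦ).aemeasurable
  have hH := ENNReal.lintegral_mul_le_Lp_mul_Lq volume hconj hmeas1 hmeas2
  have e1 : ∀ y, ((fun y => f y * (Φ y) ^ ((2:ℝ)⁻¹)) * fun y => (Φ y) ^ ((2:ℝ)⁻¹)) y
      = f y * Φ y := by
    intro y
    simp only [Pi.mul_apply]
    rw [mul_assoc, ← ENNReal.rpow_add_of_nonneg _ _ (by norm_num) (by norm_num)]
    norm_num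
  have e2 : ∀ y, (f y * (Φ y) ^ ((2:ℝ)⁻¹)) ^ (2:ℝ) = f y ^ (2:ℝ) * Φ y := by
    intro y
    rw [ENNReal.mul_rpow_of_nonneg _ _ (by norm_num : (0:ℝ) ≤ 2), ← ENNReal.rpow_mul]
    norm_num
  have e3 : ∀ y, ((Φ y) ^ ((2:ℝ)⁻¹)) ^ (2:ℝ) = Φ y := by
    intro y
    rw [← ENNReal.rpow_mul]
    norm_num
  simp_rw [e1, e2, e3] at hH
  rw [hΦ1] at hH
  simp only [ENNReal.one_rpow, mul_one] at hH
  calc (∫⁻ y, f y * Φ y)^2 ≤ ((∫⁻ y, f y ^ (2:ℝ) * Φ y) ^ (1/(2:ℝ)))^2 :=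
        pow_le_pow_left₀ zero_le hH 2
    _ = ∫⁻ y, f y^2 * Φ y := by
        rw [← ENNReal.rpow_natCast (_ ^ (1/(2:ℝ))) 2, ← ENNReal.rpow_mul]
        norm_num

/-- For the heat-equation solution `u(x,t) = (F * Φ_t)(x)` on `ℝⁿ = ℝ^k × ℝ^{n-k}` with
`Φ_t(x) = (4πt)^{-n/2} e^{-|x|²/(4t)}` and `H = ℝ^k × {0}`, for every `t > 0`:
`‖u(·,t)|_H‖_{L²(ℝ^k)} ≤ (4πt)^{-(n-k)/4} ‖F‖_{L²(ℝⁿ)}`. -/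
theorem stmt8 (k m : ℕ) (hm : 1 ≤ m) (t : ℝ) (ht : 0 < t)
    (F : SchwartzMap (E (k + m)) ℂ) :
    (∫ x' : E k,
        ‖∫ y : E (k + m),
            F (app x' 0 - y) *
              (((4 * π * t) ^ (-((k + m : ℕ) : ℝ) / 2) *
                  Real.exp (-‖y‖ ^ 2 / (4 * t)) : ℝ) : ℂ)‖ ^ 2) ^ ((1 : ℝ) / 2) ≤
      (4 * π * t) ^ (-((m : ℝ)) / 4) * (∫ x : E (k + m), ‖F x‖ ^ 2) ^ ((1 : ℝ) / 2) := by
  have hπ := Real.pi_pos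
  have h4 : (0:ℝ) < 4*π*t := by positivity
  set c : ℝ := (4 * π * t) ^ (-((k + m : ℕ) : ℝ) / 2) with hcdef
  have hc0 : 0 < c := Real.rpow_pos_of_pos h4 _
  have hφ0 : ∀ y : E (k+m), 0 ≤ c * Real.exp (-‖y‖^2/(4*t)) :=
    fun y => mul_nonneg hc0.le (Real.exp_pos _).le
  -- continuity / measurability facts
  have hφc : Continuous fun y : E (k+m) => c * Real.exp (-‖y‖^2/(4*t)) := continuous_const.mul
    (Real.continuous_exp.comp (((continuous_norm.pow 2).neg).div_const (4*t)))
  have hΦm : Measurable fun y : E (k+m) => ENNReal.ofReal (c * Real.exp (-‖y‖^2/(4*t))) :=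
    ENNReal.measurable_ofReal.comp hφc.measurable
  have h_app_meas : Measurable fun p : E k × E m => app p.1 p.2 := app_mp.measurable
  have hAb : ∀ b : E m, Measurable fun a : E k => app a b :=
    fun b => h_app_meas.comp (measurable_id.prodMk measurable_const)
  have hGm : Measurable fun p : E k × E (k+m) => F (app p.1 0 - p.2) :=
    F.continuous.measurable.comp (((hAb 0).comp measurable_fst).sub measurable_snd)
  have hKm : Measurable fun p : E k × E (k+m) => (‖F (app p.1 0 - p.2)‖₊ : ℝ≥0∞)^2 :=
    hGm.enorm.pow_const 2
  have hfullm : Measurable fun p : E k × E (k+m) =>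
      F (app p.1 0 - p.2) * ((c * Real.exp (-‖p.2‖^2/(4*t)) : ℝ) : ℂ) :=
    hGm.mul (Complex.measurable_ofReal.comp (hφc.measurable.comp measurable_snd))
  have hu_sm : AEStronglyMeasurable
      (fun x' : E k => ∫ y : E (k+m), F (app x' 0 - y) * ((c * Real.exp (-‖y‖^2/(4*t)) : ℝ) : ℂ))
      volume :=
    (hfullm.stronglyMeasurable.integral_prod_right').aestronglyMeasurable
  -- Φ has total integral 1
  have hΦ1 : ∫⁻ y : E (k+m), ENNReal.ofReal (c * Real.exp (-‖y‖^2/(4*t))) = 1 := by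
    have h : ∀ y : E (k+m), ENNReal.ofReal (c * Real.exp (-‖y‖^2/(4*t)))
        = ENNReal.ofReal c * ENNReal.ofReal (Real.exp (-‖y‖^2/(4*t))) :=
      fun y => ENNReal.ofReal_mul hc0.le
    simp_rw [h]
    rw [lintegral_const_mul' _ _ ENNReal.ofReal_ne_top, gauss_lint (k+m) ht,
      ← ENNReal.ofReal_mul hc0.le, hcdef, ← Real.rpow_add h4,
      show (-((k+m:ℕ):ℝ)/2 + ((k+m:ℕ):ℝ)/2 : ℝ) = 0 by ring, Real.rpow_zero,
      ENNReal.ofReal_one]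
  -- pointwise Cauchy-Schwarz
  have step1 : ∀ x' : E k,
      (‖∫ y : E (k+m), F (app x' 0 - y) * ((c * Real.exp (-‖y‖^2/(4*t)) : ℝ) : ℂ)‖₊ : ℝ≥0∞)^2 ≤
      ∫⁻ y : E (k+m), (‖F (app x' 0 - y)‖₊ : ℝ≥0∞)^2
        * ENNReal.ofReal (c * Real.exp (-‖y‖^2/(4*t))) := by
    intro x'
    have hfm : Measurable fun y : E (k+m) => (‖F (app x' 0 - y)‖₊ : ℝ≥0∞) :=
      (F.continuous.measurable.comp (measurable_const.sub measurable_id)).enorm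
    have h1 : (‖∫ y : E (k+m), F (app x' 0 - y) * ((c * Real.exp (-‖y‖^2/(4*t)) : ℝ) : ℂ)‖₊ : ℝ≥0∞)
        ≤ ∫⁻ y, (‖F (app x' 0 - y)‖₊ : ℝ≥0∞)
            * ENNReal.ofReal (c * Real.exp (-‖y‖^2/(4*t))) := by
      refine (enorm_integral_le_lintegral_enorm _).trans_eq ?_
      congr 1
      funext y
      rw [enorm_mul, enorm_eq_nnnorm, enorm_eq_nnnorm]
      congr 1
      rw [← enorm_eq_nnnorm, ← ofReal_norm]
      simp only [Complex.norm_real]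
      rw [Real.norm_eq_abs, abs_of_nonneg (hφ0 y)]
    calc (‖∫ y : E (k+m), F (app x' 0 - y) * ((c * Real.exp (-‖y‖^2/(4*t)) : ℝ) : ℂ)‖₊ : ℝ≥0∞)^2
        ≤ (∫⁻ y, (‖F (app x' 0 - y)‖₊ : ℝ≥0∞)
            * ENNReal.ofReal (c * Real.exp (-‖y‖^2/(4*t))))^2 :=
          pow_le_pow_left₀ zero_le h1 2
      _ ≤ _ := cs_step _ _ hfm hΦm hΦ1
  -- finiteness of ‖F‖₂²
  have hFm2 : Measurable fun x : E (k+m) => (‖F x‖₊ : ℝ≥0∞)^2 :=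
    F.continuous.measurable.enorm.pow_const 2
  have hI_ne_top : (∫⁻ x : E (k+m), (‖F x‖₊ : ℝ≥0∞)^2) ≠ ⊤ := by
    have hint : Integrable (fun x : E (k+m) => ‖F x‖^2) := by
      have h1 : Integrable (fun x : E (k+m) => ‖F x‖) := F.integrable.norm
      have h2 := h1.bdd_mul (F.continuous.norm.aestronglyMeasurable)
        (Filter.Eventually.of_forall fun x => by
          rw [norm_norm]; exact F.norm_le_seminorm ℝ x)
      refine h2.congr (Filter.Eventually.of_forall fun x => ?_)
      simp [sq]
    have h3 : (∫⁻ x : E (k+m), (‖‖F x‖^2‖₊ : ℝ≥0∞)) < ⊤ := hint.hasFiniteIntegral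
    refine ne_of_lt (lt_of_eq_of_lt ?_ h3)
    refine lintegral_congr fun x => ?_
    rw [nnnorm_pow, nnnorm_norm, ENNReal.coe_pow]
  -- Tonelli swap
  have hswap : ∫⁻ x' : E k, ∫⁻ y : E (k+m), (‖F (app x' 0 - y)‖₊ : ℝ≥0∞)^2
        * ENNReal.ofReal (c * Real.exp (-‖y‖^2/(4*t)))
      = ∫⁻ y : E (k+m), (∫⁻ x' : E k, (‖F (app x' 0 - y)‖₊ : ℝ≥0∞)^2)
        * ENNReal.ofReal (c * Real.exp (-‖y‖^2/(4*t))) := by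
    rw [lintegral_lintegral_swap (hKm.mul (hΦm.comp measurable_snd)).aemeasurable]
    refine lintegral_congr fun y => ?_
    exact lintegral_mul_const _
      ((F.continuous.measurable.comp ((hAb 0).sub measurable_const)).enorm.pow_const 2)
  have hJm : Measurable fun y : E (k+m) =>
      ∫⁻ x' : E k, (‖F (app x' 0 - y)‖₊ : ℝ≥0∞)^2 := hKm.lintegral_prod_left'
  have hGmB : Measurable fun b : E m => ∫⁻ x' : E k, (‖F (app x' b)‖₊ : ℝ≥0∞)^2 :=
    Measurable.lintegral_prod_left'
      ((F.continuous.measurable.comp h_app_meas).enorm.pow_const 2)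
  have hJG : ∀ (a : E k) (b : E m),
      (∫⁻ x' : E k, (‖F (app x' 0 - app a b)‖₊ : ℝ≥0∞)^2)
        = ∫⁻ x' : E k, (‖F (app x' (-b))‖₊ : ℝ≥0∞)^2 := by
    intro a b
    have e : ∀ x' : E k, app x' 0 - app a b = app (x' - a) (-b) := fun x' => by
      rw [app_sub, zero_sub]
    simp_rw [e]
    exact (measurePreserving_sub_right (volume : Measure (E k)) a).lintegral_comp
      ((F.continuous.measurable.comp (hAb (-b))).enorm.pow_const 2)
  have hΦapp : ∀ (a : E k) (b : E m),
      ENNReal.ofReal (c * Real.exp (-‖app a b‖^2/(4*t)))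
      = ENNReal.ofReal (c * Real.exp (-‖a‖^2/(4*t)))
        * ENNReal.ofReal (Real.exp (-‖b‖^2/(4*t))) := by
    intro a b
    rw [show -‖app a b‖^2/(4*t) = -‖a‖^2/(4*t) + -‖b‖^2/(4*t) by rw [norm_app_sq]; ring,
      Real.exp_add, ← mul_assoc]
    exact ENNReal.ofReal_mul (mul_nonneg hc0.le (Real.exp_pos _).le)
  -- the main estimate
  have main : (∫⁻ y : E (k+m), (∫⁻ x' : E k, (‖F (app x' 0 - y)‖₊ : ℝ≥0∞)^2)
        * ENNReal.ofReal (c * Real.exp (-‖y‖^2/(4*t))))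
      ≤ ENNReal.ofReal ((4*π*t) ^ (-(m:ℝ)/2)) * ∫⁻ x : E (k+m), (‖F x‖₊ : ℝ≥0∞)^2 := by
    rw [← app_mp.lintegral_comp (show Measurable fun y : E (k+m) => (∫⁻ x' : E k, (‖F (app x' 0 - y)‖₊ : ℝ≥0∞)^2) * ENNReal.ofReal (c * Real.exp (-‖y‖^2/(4*t))) from hJm.mul hΦm)]
    have hfmeas : Measurable fun a : E k => ENNReal.ofReal (c * Real.exp (-‖a‖^2/(4*t))) :=
      ENNReal.measurable_ofReal.comp (continuous_const.mul
        (Real.continuous_exp.comp (((continuous_norm.pow 2).neg).div_const (4*t)))).measurable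
    have hgmeas : Measurable fun b : E m =>
        ENNReal.ofReal (Real.exp (-‖b‖^2/(4*t)))
          * ∫⁻ x' : E k, (‖F (app x' (-b))‖₊ : ℝ≥0∞)^2 :=
      (ENNReal.measurable_ofReal.comp
        (Real.continuous_exp.comp (((continuous_norm.pow 2).neg).div_const (4*t))).measurable).mul
        (hGmB.comp measurable_neg)
    calc ∫⁻ p : E k × E m, (∫⁻ x' : E k, (‖F (app x' 0 - app p.1 p.2)‖₊ : ℝ≥0∞)^2)
            * ENNReal.ofReal (c * Real.exp (-‖app p.1 p.2‖^2/(4*t)))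
        = ∫⁻ p : E k × E m, (ENNReal.ofReal (c * Real.exp (-‖p.1‖^2/(4*t))))
            * (ENNReal.ofReal (Real.exp (-‖p.2‖^2/(4*t)))
              * ∫⁻ x' : E k, (‖F (app x' (-p.2))‖₊ : ℝ≥0∞)^2) := by
          refine lintegral_congr fun p => ?_
          rw [hJG p.1 p.2, hΦapp p.1 p.2]
          ring
      _ = (∫⁻ a : E k, ENNReal.ofReal (c * Real.exp (-‖a‖^2/(4*t))))
            * ∫⁻ b : E m, ENNReal.ofReal (Real.exp (-‖b‖^2/(4*t)))
              * ∫⁻ x' : E k, (‖F (app x' (-b))‖₊ : ℝ≥0∞)^2 :=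
          lintegral_prod_mul hfmeas.aemeasurable hgmeas.aemeasurable
      _ ≤ ENNReal.ofReal ((4*π*t) ^ (-(m:ℝ)/2)) * ∫⁻ x : E (k+m), (‖F x‖₊ : ℝ≥0∞)^2 := by
          refine mul_le_mul ?_ ?_ zero_le zero_le
          · refine le_of_eq ?_
            have h : ∀ a : E k, ENNReal.ofReal (c * Real.exp (-‖a‖^2/(4*t)))
                = ENNReal.ofReal c * ENNReal.ofReal (Real.exp (-‖a‖^2/(4*t))) :=
              fun a => ENNReal.ofReal_mul hc0.le
            simp_rw [h]
            rw [lintegral_const_mul' _ _ ENNReal.ofReal_ne_top, gauss_lint k ht,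
              ← ENNReal.ofReal_mul hc0.le, hcdef, ← Real.rpow_add h4]
            congr 2
            push_cast
            ring
          · calc ∫⁻ b : E m, ENNReal.ofReal (Real.exp (-‖b‖^2/(4*t)))
                  * ∫⁻ x' : E k, (‖F (app x' (-b))‖₊ : ℝ≥0∞)^2
                ≤ ∫⁻ b : E m, ∫⁻ x' : E k, (‖F (app x' (-b))‖₊ : ℝ≥0∞)^2 := by
                  refine lintegral_mono fun b => ?_
                  refine mul_le_of_le_one_left zero_le ?_
                  rw [← ENNReal.ofReal_one]
                  refine ENNReal.ofReal_le_ofReal ?_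
                  rw [← Real.exp_zero]
                  refine Real.exp_le_exp.2 ?_
                  have h0 : (0:ℝ) ≤ ‖b‖^2/(4*t) := by positivity
                  rw [neg_div]
                  linarith
              _ = ∫⁻ b : E m, ∫⁻ x' : E k, (‖F (app x' b)‖₊ : ℝ≥0∞)^2 :=
                  (Measure.measurePreserving_neg (volume : Measure (E m))).lintegral_comp hGmB
              _ = ∫⁻ x' : E k, ∫⁻ b : E m, (‖F (app x' b)‖₊ : ℝ≥0∞)^2 :=
                  (lintegral_lintegral_swap
                    ((F.continuous.measurable.comp h_app_meas).enorm.pow_const 2).aemeasurable).symm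
              _ = ∫⁻ p : E k × E m, (‖F (app p.1 p.2)‖₊ : ℝ≥0∞)^2 :=
                  (lintegral_prod _
                    ((F.continuous.measurable.comp h_app_meas).enorm.pow_const 2).aemeasurable).symm
              _ = ∫⁻ x : E (k+m), (‖F x‖₊ : ℝ≥0∞)^2 := app_mp.lintegral_comp hFm2
  -- combine in ℝ≥0∞
  have hkey : (∫⁻ x' : E k,
        (‖∫ y : E (k+m), F (app x' 0 - y) * ((c * Real.exp (-‖y‖^2/(4*t)) : ℝ) : ℂ)‖₊ : ℝ≥0∞)^2)
      ≤ ENNReal.ofReal ((4*π*t) ^ (-(m:ℝ)/2)) * ∫⁻ x : E (k+m), (‖F x‖₊ : ℝ≥0∞)^2 :=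
    le_trans (lintegral_mono step1) (le_trans (le_of_eq hswap) main)
  -- convert to real integrals
  have hLHSeq : (∫ x' : E k,
        ‖∫ y : E (k+m), F (app x' 0 - y) * ((c * Real.exp (-‖y‖^2/(4*t)) : ℝ) : ℂ)‖^2)
      = (∫⁻ x' : E k,
        (‖∫ y : E (k+m), F (app x' 0 - y) * ((c * Real.exp (-‖y‖^2/(4*t)) : ℝ) : ℂ)‖₊ : ℝ≥0∞)^2).toReal := by
    rw [integral_eq_lintegral_of_nonneg_ae (Filter.Eventually.of_forall fun x' => sq_nonneg _)
      ((hu_sm.norm.aemeasurable.pow_const 2).aestronglyMeasurable)]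
    congr 1
    refine lintegral_congr fun x' => ?_
    rw [ENNReal.ofReal_pow (norm_nonneg _), ofReal_norm, enorm_eq_nnnorm]
  have hRHSeq : (∫ x : E (k+m), ‖F x‖^2)
      = (∫⁻ x : E (k+m), (‖F x‖₊ : ℝ≥0∞)^2).toReal := by
    rw [integral_eq_lintegral_of_nonneg_ae (Filter.Eventually.of_forall fun x => sq_nonneg _)
      ((F.continuous.norm.aemeasurable.pow_const 2).aestronglyMeasurable)]
    congr 1
    refine lintegral_congr fun x => ?_
    rw [ENNReal.ofReal_pow (norm_nonneg _), ofReal_norm, enorm_eq_nnnorm]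
  rw [hLHSeq, hRHSeq]
  have hCnn : (0:ℝ) ≤ (4*π*t) ^ (-(m:ℝ)/2) := (Real.rpow_pos_of_pos h4 _).le
  have hne : ENNReal.ofReal ((4*π*t) ^ (-(m:ℝ)/2)) * (∫⁻ x : E (k+m), (‖F x‖₊ : ℝ≥0∞)^2) ≠ ⊤ :=
    ENNReal.mul_ne_top ENNReal.ofReal_ne_top hI_ne_top
  have h1 : (∫⁻ x' : E k,
        (‖∫ y : E (k+m), F (app x' 0 - y) * ((c * Real.exp (-‖y‖^2/(4*t)) : ℝ) : ℂ)‖₊ : ℝ≥0∞)^2).toReal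
      ≤ ((4*π*t) ^ (-(m:ℝ)/2)) * (∫⁻ x : E (k+m), (‖F x‖₊ : ℝ≥0∞)^2).toReal := by
    refine le_trans (ENNReal.toReal_mono hne hkey) ?_
    rw [ENNReal.toReal_mul, ENNReal.toReal_ofReal hCnn]
  calc (∫⁻ x' : E k,
        (‖∫ y : E (k+m), F (app x' 0 - y) * ((c * Real.exp (-‖y‖^2/(4*t)) : ℝ) : ℂ)‖₊ : ℝ≥0∞)^2).toReal
          ^ ((1:ℝ)/2)
      ≤ (((4*π*t) ^ (-(m:ℝ)/2)) * (∫⁻ x : E (k+m), (‖F x‖₊ : ℝ≥0∞)^2).toReal) ^ ((1:ℝ)/2) :=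
        Real.rpow_le_rpow ENNReal.toReal_nonneg h1 (by norm_num)
    _ = (4*π*t) ^ (-(m:ℝ)/4) * (∫⁻ x : E (k+m), (‖F x‖₊ : ℝ≥0∞)^2).toReal ^ ((1:ℝ)/2) := by
        rw [Real.mul_rpow hCnn ENNReal.toReal_nonneg]
        congr 1
        rw [← Real.rpow_mul h4.le, show (-(m:ℝ)/2 * ((1:ℝ)/2)) = -(m:ℝ)/4 by ring]
end
end
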